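/- If a level equation l₁ ≐ l₂ has variables occurring on both sides (i.e., l₁ contains some variable and l₂ contains some variable), and is in canonical form, then it admits a unifier: taking i₁ a variable of l₁ and i₂ a variable of l₂, p = max(l₁⟨0⟩, l₂⟨0⟩), the substitution mapping i₁ to the constant p − l₁⟨i₁⟩, i₂ to the constant p − l₂⟨i₂⟩, and all other variables to 0, is a unifier. -/

import Mathlib

/-- Universe level expressions: `l ::= i | 0 | S l | l ⊔ l'`. -/
inductive Lvl : Type
  | var : ℕ → Lvl
  | zero : Lvl
  | succ : Lvl → Lvl
  | max : Lvl → Lvl → Lvl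
  deriving DecidableEq

namespace Lvl

/-- Interpretation of a level under an assignment `φ` of naturals to variables. -/
def eval (φ : ℕ → ℕ) : Lvl → ℕ
  | .var i => φ i
  | .zero => 0
  | .succ l => l.eval φ + 1
  | .max a b => Nat.max (a.eval φ) (b.eval φ)

/-- Semantic equivalence: equal value under every assignment. -/
def Equiv (l l' : Lvl) : Prop := ∀ φ : ℕ → ℕ, l.eval φ = l'.eval φ

/-- Application of a level substitution. -/
def subst (θ : ℕ → Lvl) : Lvl → Lvl
  | .var i => θ i
  | .zero => .zero
  | .succ l => .succ (l.subst θ)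
  | .max a b => .max (a.subst θ) (b.subst θ)

/-- Free variables of a level. -/
def fv : Lvl → Finset ℕ
  | .var i => {i}
  | .zero => ∅
  | .succ l => l.fv
  | .max a b => a.fv ∪ b.fv

/-- The constant level `n`, i.e. `Sⁿ 0`. -/
def const (n : ℕ) : Lvl := Lvl.succ^[n] Lvl.zero

/-- The level `n + i`, i.e. `Sⁿ i`. -/
def atom (n i : ℕ) : Lvl := Lvl.succ^[n] (Lvl.var i)

end Lvl

/-- `θ` is a unifier of the equation `l₁ ≐ l₂`. -/
def Unifies (θ : ℕ → Lvl) (l₁ l₂ : Lvl) : Prop := Lvl.Equiv (l₁.subst θ) (l₂.subst θ)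

/-- `θ` is a most general unifier of the equation `l₁ ≐ l₂`. -/
def IsMGU (θ : ℕ → Lvl) (l₁ l₂ : Lvl) : Prop :=
  Unifies θ l₁ l₂ ∧ ∀ τ, Unifies τ l₁ l₂ →
    ∃ θ' : ℕ → Lvl, ∀ i ∈ l₁.fv ∪ l₂.fv, Lvl.Equiv ((θ i).subst θ') (τ i)

/-- The level `p ⊔ (n₁ + i₁) ⊔ ... ⊔ (n_m + i_m)` given by canonical-form data. -/
def buildCanon (p : ℕ) (L : List (ℕ × ℕ)) : Lvl :=
  L.foldr (fun a acc => Lvl.max (Lvl.atom a.1 a.2) acc) (Lvl.const p)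

/-- The equation `buildCanon p₁ L₁ ≐ buildCanon p₂ L₂` is in canonical form:
both sides canonical (coefficients bounded by the constant coefficient, variables
pairwise distinct), shared variables have equal coefficients on both sides, and
some coefficient on some side equals `0`. -/
def CanonEqn (p₁ : ℕ) (L₁ : List (ℕ × ℕ)) (p₂ : ℕ) (L₂ : List (ℕ × ℕ)) : Prop :=
  (∀ a ∈ L₁, a.1 ≤ p₁) ∧ (L₁.map Prod.snd).Nodup ∧
  (∀ a ∈ L₂, a.1 ≤ p₂) ∧ (L₂.map Prod.snd).Nodup ∧
  (∀ a ∈ L₁, ∀ b ∈ L₂, a.2 = b.2 → a.1 = b.1) ∧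
  0 ∈ (p₁ :: p₂ :: (L₁ ++ L₂).map Prod.fst)


lemma Lvl.eval_subst (θ : ℕ → Lvl) (φ : ℕ → ℕ) :
    ∀ l : Lvl, (l.subst θ).eval φ = l.eval (fun i => (θ i).eval φ)
  | .var i => rfl
  | .zero => rfl
  | .succ l => by simp [Lvl.subst, Lvl.eval, Lvl.eval_subst θ φ l]
  | .max a b => by simp [Lvl.subst, Lvl.eval, Lvl.eval_subst θ φ a, Lvl.eval_subst θ φ b]

lemma Lvl.eval_const (φ : ℕ → ℕ) (n : ℕ) : (Lvl.const n).eval φ = n := by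
  induction n with
  | zero => rfl
  | succ n ih =>
    rw [Lvl.const, Function.iterate_succ_apply']
    have h : Lvl.succ^[n] Lvl.zero = Lvl.const n := rfl
    rw [h]
    simp [Lvl.eval, ih]

lemma Lvl.eval_atom (φ : ℕ → ℕ) (n i : ℕ) : (Lvl.atom n i).eval φ = n + φ i := by
  induction n with
  | zero => simp [Lvl.atom, Lvl.eval]
  | succ n ih =>
    rw [Lvl.atom, Function.iterate_succ_apply']
    have h : Lvl.succ^[n] (Lvl.var i) = Lvl.atom n i := rfl
    rw [h]
    simp [Lvl.eval, ih]
    omega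

lemma eval_buildCanon (φ : ℕ → ℕ) (p : ℕ) (L : List (ℕ × ℕ)) :
    (buildCanon p L).eval φ = L.foldr (fun a acc => Nat.max (a.1 + φ a.2) acc) p := by
  induction L with
  | nil => simp [buildCanon, Lvl.eval_const]
  | cons a L ih =>
    simp only [buildCanon, List.foldr_cons] at *
    simp [Lvl.eval, Lvl.eval_atom, ih]

lemma foldr_max_le {f : ℕ × ℕ → ℕ} {p b : ℕ} {L : List (ℕ × ℕ)}
    (hb : b ≤ p) (hall : ∀ a ∈ L, f a ≤ p) :
    L.foldr (fun a acc => Nat.max (f a) acc) b ≤ p := by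
  induction L with
  | nil => simpa
  | cons a L ih =>
    simp only [List.foldr_cons]
    exact Nat.max_le.2 ⟨hall a (by simp), ih (fun a ha => hall a (by simp [ha]))⟩

lemma le_foldr_max {f : ℕ × ℕ → ℕ} {b : ℕ} {L : List (ℕ × ℕ)} {x : ℕ × ℕ}
    (hx : x ∈ L) : f x ≤ L.foldr (fun a acc => Nat.max (f a) acc) b := by
  induction L with
  | nil => simp at hx
  | cons a L ih =>
    simp only [List.foldr_cons]
    rcases List.mem_cons.1 hx with rfl | hx
    · exact Nat.le_max_left _ _
    · exact le_trans (ih hx) (Nat.le_max_right _ _)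

lemma foldr_max_eq {f : ℕ × ℕ → ℕ} {p b : ℕ} {L : List (ℕ × ℕ)} {x : ℕ × ℕ}
    (hb : b ≤ p) (hall : ∀ a ∈ L, f a ≤ p) (hx : x ∈ L) (hfx : f x = p) :
    L.foldr (fun a acc => Nat.max (f a) acc) b = p :=
  le_antisymm (foldr_max_le hb hall) (hfx ▸ le_foldr_max hx)

/-- If a level equation in canonical form has variables on both sides, then it
admits a unifier: with `i₁` a variable of `l₁` (of coefficient `c₁`), `i₂` a
variable of `l₂` (of coefficient `c₂`) and `p = max(l₁⟨0⟩, l₂⟨0⟩)`, the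
substitution mapping `i₁` to the constant `p − c₁`, `i₂` to the constant `p − c₂`
and every other variable to `0` is a unifier. -/
theorem unifier_of_vars_both_sides (p₁ p₂ : ℕ) (L₁ L₂ : List (ℕ × ℕ))
    (hcanon : CanonEqn p₁ L₁ p₂ L₂)
    (c₁ i₁ : ℕ) (h₁ : (c₁, i₁) ∈ L₁) (c₂ i₂ : ℕ) (h₂ : (c₂, i₂) ∈ L₂) :
    Unifies
      (fun j =>
        if j = i₁ then Lvl.const (Nat.max p₁ p₂ - c₁)
        else if j = i₂ then Lvl.const (Nat.max p₁ p₂ - c₂)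
        else Lvl.zero)
      (buildCanon p₁ L₁) (buildCanon p₂ L₂) := by
  obtain ⟨hb₁, hnd₁, hb₂, hnd₂, hsh, -⟩ := hcanon
  intro φ
  set p := Nat.max p₁ p₂ with hp
  set θ : ℕ → Lvl := fun j =>
        if j = i₁ then Lvl.const (Nat.max p₁ p₂ - c₁)
        else if j = i₂ then Lvl.const (Nat.max p₁ p₂ - c₂)
        else Lvl.zero with hθ
  have hψ : ∀ j, (θ j).eval φ = if j = i₁ then p - c₁ else if j = i₂ then p - c₂ else 0 := by
    intro j
    simp only [hθ]
    split_ifs <;> simp [Lvl.eval_const, Lvl.eval, hp]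
  rw [Lvl.eval_subst, Lvl.eval_subst, eval_buildCanon, eval_buildCanon]
  have hpl : p₁ ≤ p := Nat.le_max_left _ _
  have hpr : p₂ ≤ p := Nat.le_max_right _ _
  have hc₁ : c₁ ≤ p := le_trans (hb₁ _ h₁) (Nat.le_max_left _ _)
  have hc₂ : c₂ ≤ p := le_trans (hb₂ _ h₂) (Nat.le_max_right _ _)
  have hL₁ : ∀ a ∈ L₁, a.1 + (θ a.2).eval φ ≤ p := by
    intro a ha
    rw [hψ]
    split_ifs with e1 e2
    · have : a = (c₁, i₁) := List.inj_on_of_nodup_map hnd₁ ha h₁ e1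
      rw [this]; omega
    · have : a.1 = c₂ := hsh a ha (c₂, i₂) h₂ e2
      omega
    · have := hb₁ a ha; omega
  have hL₂ : ∀ a ∈ L₂, a.1 + (θ a.2).eval φ ≤ p := by
    intro a ha
    rw [hψ]
    split_ifs with e1 e2
    · have : a.1 = c₁ := (hsh (c₁, i₁) h₁ a ha e1.symm).symm
      omega
    · have : a = (c₂, i₂) := List.inj_on_of_nodup_map hnd₂ ha h₂ e2
      rw [this]; omega
    · have := hb₂ a ha; omega
  have hw₁ : (c₁, i₁).1 + (θ (c₁, i₁).2).eval φ = p := by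
    rw [hψ]; simp; omega
  have hw₂ : (c₂, i₂).1 + (θ (c₂, i₂).2).eval φ = p := by
    rw [hψ]
    by_cases e : i₂ = i₁
    · have : c₁ = c₂ := hsh (c₁, i₁) h₁ (c₂, i₂) h₂ (by simp [e])
      simp [e, this]; omega
    · simp [e]; omega
  rw [foldr_max_eq (Nat.le_max_left _ _) hL₁ h₁ hw₁,
      foldr_max_eq (Nat.le_max_right _ _) hL₂ h₂ hw₂]
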